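/- Let W : ℝ → ℝ be twice differentiable with W'(0) = 0 and |W''(x)| ≤ K̄|x|^α for all x ∈ ℝ, where K̄ > 0 and α ≥ 0. Let λ ≥ 0, set w_n = exp(λ|n|), and let u : ℤ → ℝ be such that (w_n u_n²)_{n∈ℤ} is summable. Then Σ_{n∈ℤ} w_n (W'(u_{n+1}) + W'(u_{n−1}) − 2W'(u_n))² ≤ 8 K̄² (1 + e^λ) (Σ_{n∈ℤ} w_n u_n²)^{α+1}. -/

import Mathlib

open Real

lemma deriv_bd (W : ℝ → ℝ) (K a : ℝ) (hW2 : Differentiable ℝ (deriv W))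
    (hW'0 : deriv W 0 = 0) (hK : 0 < K) (ha : 0 ≤ a)
    (hgrow : ∀ x : ℝ, |deriv (deriv W) x| ≤ K * |x| ^ a) (x : ℝ) :
    |deriv W x| ≤ K * |x| ^ a * |x| := by
  have hconv : Convex ℝ (Set.uIcc (0:ℝ) x) := convex_uIcc _ _
  have hf : ∀ y ∈ Set.uIcc (0:ℝ) x,
      HasDerivWithinAt (deriv W) (deriv (deriv W) y) (Set.uIcc (0:ℝ) x) y :=
    fun y _ => (hW2 y).hasDerivAt.hasDerivWithinAt
  have hbound : ∀ y ∈ Set.uIcc (0:ℝ) x, ‖deriv (deriv W) y‖ ≤ K * |x| ^ a := by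
    intro y hy
    have h1 : |y| ≤ |x| := by
      rcases Set.mem_uIcc.mp hy with ⟨h1, h2⟩ | ⟨h1, h2⟩ <;>
      · rw [abs_le]
        constructor <;> nlinarith [le_abs_self x, neg_abs_le x]
    calc ‖deriv (deriv W) y‖ ≤ K * |y| ^ a := by
          simpa [Real.norm_eq_abs] using hgrow y
    _ ≤ K * |x| ^ a := by
        have := Real.rpow_le_rpow (abs_nonneg y) h1 ha
        nlinarith
  have := hconv.norm_image_sub_le_of_norm_hasDerivWithin_le hf hbound
    Set.right_mem_uIcc Set.left_mem_uIcc
  simpa [hW'0, Real.norm_eq_abs] using this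

/-- Weighted bound on the range of the nonlinear operator
`(N(u))_n = W'(u_{n+1}) + W'(u_{n−1}) − 2W'(u_n)` on the exponentially weighted
space `ℓ²_w` with `w_n = exp(λ|n|)`. -/
theorem stmt8 (W : ℝ → ℝ) (K a lam : ℝ) (u : ℤ → ℝ) (w : ℤ → ℝ)
    (hW1 : Differentiable ℝ W) (hW2 : Differentiable ℝ (deriv W))
    (hW'0 : deriv W 0 = 0) (hK : 0 < K) (ha : 0 ≤ a)
    (hgrow : ∀ x : ℝ, |deriv (deriv W) x| ≤ K * |x| ^ a)
    (hlam : 0 ≤ lam)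
    (hw : ∀ n : ℤ, w n = Real.exp (lam * |(n : ℝ)|))
    (hsum : Summable fun n : ℤ => w n * (u n) ^ 2) :
    (Summable fun n : ℤ =>
      w n * (deriv W (u (n + 1)) + deriv W (u (n - 1)) - 2 * deriv W (u n)) ^ 2) ∧
    (∑' n : ℤ, w n * (deriv W (u (n + 1)) + deriv W (u (n - 1)) - 2 * deriv W (u n)) ^ 2)
      ≤ 8 * K ^ 2 * (1 + Real.exp lam) * (∑' n : ℤ, w n * (u n) ^ 2) ^ (a + 1) := by
  set S : ℝ := ∑' n : ℤ, w n * (u n) ^ 2 with hS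
  have hwpos : ∀ n : ℤ, 0 < w n := fun n => (hw n) ▸ Real.exp_pos _
  have hw1 : ∀ n : ℤ, 1 ≤ w n := by
    intro n
    rw [hw n]
    exact Real.one_le_exp (mul_nonneg hlam (abs_nonneg _))
  have hterm_nonneg : ∀ n : ℤ, 0 ≤ w n * (u n) ^ 2 :=
    fun n => mul_nonneg (hwpos n).le (sq_nonneg _)
  have hSnonneg : 0 ≤ S := tsum_nonneg hterm_nonneg
  -- each u n ^ 2 ≤ S
  have husq : ∀ n : ℤ, (u n) ^ 2 ≤ S := by
    intro n
    have h1 : w n * (u n) ^ 2 ≤ S := Summable.le_tsum hsum n fun m _ => hterm_nonneg m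
    nlinarith [hw1 n, sq_nonneg (u n)]
  -- pointwise bound for T
  set T : ℤ → ℝ := fun n => w n * (deriv W (u n)) ^ 2 with hT
  have hTnonneg : ∀ n, 0 ≤ T n := fun n => mul_nonneg (hwpos n).le (sq_nonneg _)
  have hTle : ∀ n, T n ≤ K ^ 2 * S ^ a * (w n * (u n) ^ 2) := by
    intro n
    have hdb := deriv_bd W K a hW2 hW'0 hK ha hgrow (u n)
    have h1 : (deriv W (u n)) ^ 2 ≤ (K * |u n| ^ a * |u n|) ^ 2 := by
      have := abs_nonneg (deriv W (u n))
      nlinarith [abs_nonneg (deriv W (u n)), sq_abs (deriv W (u n)),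
        mul_nonneg (mul_nonneg hK.le (Real.rpow_nonneg (abs_nonneg (u n)) a)) (abs_nonneg (u n))]
    have h2 : (K * |u n| ^ a * |u n|) ^ 2 = K ^ 2 * ((u n) ^ 2) ^ a * (u n) ^ 2 := by
      have hx : ((u n) ^ 2) ^ a = (|u n| ^ a) ^ 2 := by
        rw [← sq_abs (u n), ← Real.rpow_natCast (|u n|) 2, ← Real.rpow_natCast (|u n| ^ a) 2,
          ← Real.rpow_mul (abs_nonneg _), ← Real.rpow_mul (abs_nonneg _)]
        ring_nf
      rw [hx, ← sq_abs (u n)]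
      ring
    have h3 : ((u n) ^ 2) ^ a ≤ S ^ a := Real.rpow_le_rpow (sq_nonneg _) (husq n) ha
    have h4 : (deriv W (u n)) ^ 2 ≤ K ^ 2 * S ^ a * (u n) ^ 2 := by
      rw [h2] at h1
      nlinarith [mul_le_mul_of_nonneg_right h3
        (mul_nonneg (sq_nonneg K) (sq_nonneg (u n)))]
    calc T n ≤ w n * (K ^ 2 * S ^ a * (u n) ^ 2) :=
          mul_le_mul_of_nonneg_left h4 (hwpos n).le
    _ = K ^ 2 * S ^ a * (w n * (u n) ^ 2) := by ring
  have hTsum : Summable T :=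
    Summable.of_nonneg_of_le hTnonneg hTle (hsum.mul_left _)
  have hTtsum : ∑' n, T n ≤ K ^ 2 * S ^ a * S := by
    calc ∑' n, T n ≤ ∑' n, K ^ 2 * S ^ a * (w n * (u n) ^ 2) :=
          Summable.tsum_le_tsum hTle hTsum (hsum.mul_left _)
    _ = K ^ 2 * S ^ a * S := by rw [tsum_mul_left]
  -- shifted sums
  have hTsum1 : Summable fun n : ℤ => T (n + 1) :=
    hTsum.comp_injective (add_left_injective 1)
  have hTsum2 : Summable fun n : ℤ => T (n - 1) :=
    hTsum.comp_injective (sub_left_injective)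
  have htsum1 : ∑' n : ℤ, T (n + 1) = ∑' n, T n := (Equiv.addRight (1:ℤ)).tsum_eq T
  have htsum2 : ∑' n : ℤ, T (n - 1) = ∑' n, T n := (Equiv.subRight (1:ℤ)).tsum_eq T
  -- weight shift
  have hwshift : ∀ n m : ℤ, |(n:ℝ)| ≤ |(m:ℝ)| + 1 → w n ≤ Real.exp lam * w m := by
    intro n m h
    rw [hw n, hw m, ← Real.exp_add, Real.exp_le_exp]
    nlinarith [mul_le_mul_of_nonneg_left h hlam]
  have hws1 : ∀ n : ℤ, w n ≤ Real.exp lam * w (n + 1) := by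
    intro n
    apply hwshift
    have h0 : ((n + 1 : ℤ) : ℝ) = (n : ℝ) + 1 := by push_cast; ring
    rw [h0]
    have := abs_add_le ((n:ℝ) + 1) (-1)
    simp only [add_neg_cancel_right, abs_neg, abs_one] at this
    linarith
  have hws2 : ∀ n : ℤ, w n ≤ Real.exp lam * w (n - 1) := by
    intro n
    apply hwshift
    have h0 : ((n - 1 : ℤ) : ℝ) = (n : ℝ) - 1 := by push_cast; ring
    rw [h0]
    have := abs_add_le ((n:ℝ) - 1) 1
    simp only [sub_add_cancel, abs_one] at this
    linarith
  -- pointwise bound for main term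
  set M : ℤ → ℝ := fun n =>
    4 * Real.exp lam * T (n + 1) + 4 * Real.exp lam * T (n - 1) + 8 * T n with hM
  have hpt : ∀ n : ℤ,
      w n * (deriv W (u (n + 1)) + deriv W (u (n - 1)) - 2 * deriv W (u n)) ^ 2 ≤ M n := by
    intro n
    set x := deriv W (u (n + 1))
    set y := deriv W (u (n - 1))
    set z := deriv W (u n)
    have hN2 : (x + y - 2 * z) ^ 2 ≤ 4 * x ^ 2 + 4 * y ^ 2 + 8 * z ^ 2 := by
      nlinarith [sq_nonneg (x - y), sq_nonneg (x + z), sq_nonneg (y + z)]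
    have h1 : w n * (x + y - 2 * z) ^ 2 ≤ 4 * (w n * x ^ 2) + 4 * (w n * y ^ 2) + 8 * (w n * z ^ 2) := by
      nlinarith [mul_le_mul_of_nonneg_left hN2 (hwpos n).le]
    have h2 : w n * x ^ 2 ≤ Real.exp lam * (w (n + 1) * x ^ 2) := by
      nlinarith [mul_le_mul_of_nonneg_right (hws1 n) (sq_nonneg x)]
    have h3 : w n * y ^ 2 ≤ Real.exp lam * (w (n - 1) * y ^ 2) := by
      nlinarith [mul_le_mul_of_nonneg_right (hws2 n) (sq_nonneg y)]
    have : M n = 4 * Real.exp lam * (w (n+1) * x ^ 2) + 4 * Real.exp lam * (w (n-1) * y ^ 2)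
        + 8 * (w n * z ^ 2) := by simp [hM, hT]; rfl
    rw [this]
    nlinarith [h1, h2, h3]
  have hnonneg : ∀ n : ℤ,
      0 ≤ w n * (deriv W (u (n + 1)) + deriv W (u (n - 1)) - 2 * deriv W (u n)) ^ 2 :=
    fun n => mul_nonneg (hwpos n).le (sq_nonneg _)
  have hMsum : Summable M := by
    apply Summable.add
    apply Summable.add
    · exact hTsum1.mul_left _
    · exact hTsum2.mul_left _
    · exact hTsum.mul_left _
  have hmain : Summable fun n : ℤ =>
      w n * (deriv W (u (n + 1)) + deriv W (u (n - 1)) - 2 * deriv W (u n)) ^ 2 :=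
    Summable.of_nonneg_of_le hnonneg hpt hMsum
  refine ⟨hmain, ?_⟩
  have hMtsum : ∑' n, M n = (8 + 8 * Real.exp lam) * ∑' n, T n := by
    rw [hM]
    rw [Summable.tsum_add (Summable.add (hTsum1.mul_left _) (hTsum2.mul_left _)) (hTsum.mul_left _),
      Summable.tsum_add (hTsum1.mul_left _) (hTsum2.mul_left _), tsum_mul_left, tsum_mul_left,
      tsum_mul_left, htsum1, htsum2]
    ring
  have hpow : S ^ a * S = S ^ (a + 1) := by
    rcases eq_or_lt_of_le hSnonneg with h | h
    · rw [← h]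
      rw [Real.zero_rpow (by linarith : a + 1 ≠ 0)]
      ring
    · rw [Real.rpow_add h, Real.rpow_one]
  calc (∑' n : ℤ, w n * (deriv W (u (n + 1)) + deriv W (u (n - 1)) - 2 * deriv W (u n)) ^ 2)
      ≤ ∑' n, M n := Summable.tsum_le_tsum hpt hmain hMsum
  _ = (8 + 8 * Real.exp lam) * ∑' n, T n := hMtsum
  _ ≤ (8 + 8 * Real.exp lam) * (K ^ 2 * S ^ a * S) := by
      have h8 : 0 ≤ 8 + 8 * Real.exp lam := by positivity
      exact mul_le_mul_of_nonneg_left hTtsum h8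
  _ = 8 * K ^ 2 * (1 + Real.exp lam) * (S ^ a * S) := by ring
  _ = 8 * K ^ 2 * (1 + Real.exp lam) * S ^ (a + 1) := by rw [hpow]
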